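/- Let A and B be finite sets with |A| ≤ |B|, let f be a uniformly random matching of A into B, let a_1, …, a_k be pairwise distinct elements of A, let S_b ⊆ B, and for each i let X_i be the indicator random variable of the event f(a_i) ∈ S_b. Then E[∏_{i=1}^{k} X_i] ≤ ∏_{i=1}^{k} E[X_i] and E[∏_{i=1}^{k} (1 − X_i)] ≤ ∏_{i=1}^{k} E[1 − X_i]; that is, the family {X_i} is negative cylinder dependent. -/

import Mathlib

open scoped Classical

open Finset Function

section Aux

variable {α β : Type*} [Fintype α] [Fintype β]

private noncomputable def cnt {k : ℕ} (a : Fin k → α) (g : Fin k → β) : ℕ :=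
  (Finset.univ.filter fun f : α ↪ β => ∀ i, f (a i) = g i).card

private lemma cnt_eq {k : ℕ} (a : Fin k → α) {g g' : Fin k → β}
    (hg : Function.Injective g) (hg' : Function.Injective g') :
    cnt a g = cnt a g' := by
  set e : {x // x ∈ Set.range g} ≃ {x // x ∈ Set.range g'} :=
    (Equiv.ofInjective g hg).symm.trans (Equiv.ofInjective g' hg') with he
  set σ : Equiv.Perm β := e.extendSubtype with hσ
  have hσg : ∀ i, σ (g i) = g' i := by
    intro i
    have hmem : g i ∈ Set.range g := Set.mem_range_self i
    rw [hσ, Equiv.extendSubtype_apply_of_mem e (g i) hmem]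
    have h1 : (Equiv.ofInjective g hg).symm ⟨g i, hmem⟩ = i := by
      rw [Equiv.symm_apply_eq]; rfl
    simp [he, Equiv.trans_apply, h1, Equiv.ofInjective_apply]
  unfold cnt
  refine Finset.card_bij' (fun f _ => f.trans σ.toEmbedding)
    (fun f _ => f.trans σ.symm.toEmbedding) ?_ ?_ ?_ ?_
  · intro f hf
    simp only [Finset.mem_filter, Finset.mem_univ, true_and] at hf ⊢
    intro i
    simp [Function.Embedding.trans_apply, hf i, hσg i]
  · intro f hf
    simp only [Finset.mem_filter, Finset.mem_univ, true_and] at hf ⊢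
    intro i
    simp only [Function.Embedding.trans_apply, Equiv.coe_toEmbedding, hf i]
    rw [← hσg i]
    simp
  · intro f _; ext x; simp
  · intro f _; ext x; simp

private def tupEquiv {k : ℕ} (T : Finset β) :
    {g : Fin k → β // Function.Injective g ∧ ∀ i, g i ∈ T} ≃ (Fin k ↪ T) where
  toFun g := ⟨fun i => ⟨g.1 i, g.2.2 i⟩, fun i j h => g.2.1 (congrArg Subtype.val h)⟩
  invFun e := ⟨fun i => (e i : β), fun i j h => e.injective (Subtype.ext h), fun i => (e i).2⟩
  left_inv g := rfl
  right_inv e := rfl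

private lemma card_inj_tuples {k : ℕ} (T : Finset β) :
    (Finset.univ.filter fun g : Fin k → β => Function.Injective g ∧ ∀ i, g i ∈ T).card
      = T.card.descFactorial k := by
  rw [← Fintype.card_subtype]
  rw [Fintype.card_congr (tupEquiv T), Fintype.card_embedding_eq, Fintype.card_coe,
    Fintype.card_fin]

private lemma decomp {k : ℕ} {a : Fin k → α} (ha : Function.Injective a) (T : Finset β) :
    (Finset.univ.filter fun f : α ↪ β => ∀ i, f (a i) ∈ T).card
      = ∑ g ∈ Finset.univ.filter (fun g : Fin k → β => Function.Injective g ∧ ∀ i, g i ∈ T),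
          cnt a g := by
  rw [Finset.card_eq_sum_card_fiberwise (f := fun (f : α ↪ β) (i : Fin k) => f (a i))
    (t := Finset.univ.filter fun g : Fin k → β => Function.Injective g ∧ ∀ i, g i ∈ T)]
  · apply Finset.sum_congr rfl
    intro g hg
    simp only [Finset.mem_filter, Finset.mem_univ, true_and] at hg
    unfold cnt
    congr 1
    ext f
    simp only [Finset.mem_filter, Finset.mem_univ, true_and, funext_iff]
    constructor
    · rintro ⟨-, h⟩; exact h
    · intro h; exact ⟨fun i => h i ▸ hg.2 i, h⟩
  · intro f hf
    simp only [Finset.mem_coe, Finset.mem_filter, Finset.mem_univ, true_and] at hf ⊢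
    exact ⟨f.injective.comp ha, hf⟩

private lemma main_count {k : ℕ} {a : Fin k → α} (ha : Function.Injective a) (T : Finset β) :
    (Fintype.card β).descFactorial k *
        (Finset.univ.filter fun f : α ↪ β => ∀ i, f (a i) ∈ T).card
      = T.card.descFactorial k * Fintype.card (α ↪ β) := by
  have hN : Fintype.card (α ↪ β)
      = (Finset.univ.filter fun f : α ↪ β => ∀ i, f (a i) ∈ (Finset.univ : Finset β)).card := by
    rw [Finset.filter_true_of_mem (fun f _ => fun i => Finset.mem_univ _), Finset.card_univ]
  have hu := card_inj_tuples (β := β) (k := k) Finset.univ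
  rw [Finset.card_univ] at hu
  rw [hN, decomp ha T, decomp ha Finset.univ, ← hu, ← card_inj_tuples T]
  rw [Finset.card_eq_sum_ones (Finset.univ.filter fun g : Fin k → β =>
      Function.Injective g ∧ ∀ i, g i ∈ (Finset.univ : Finset β)),
    Finset.card_eq_sum_ones (Finset.univ.filter fun g : Fin k → β =>
      Function.Injective g ∧ ∀ i, g i ∈ T)]
  rw [Finset.sum_mul, Finset.sum_mul]
  simp only [one_mul]
  rw [Finset.sum_comm]
  apply Finset.sum_congr rfl
  intro g hg
  apply Finset.sum_congr rfl
  intro g' hg'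
  simp only [Finset.mem_filter, Finset.mem_univ, true_and] at hg hg'
  exact cnt_eq a hg.1 hg'.1

end Aux

private lemma key {α β : Type*} [Fintype α] [Fintype β]
    (hcard : Fintype.card α ≤ Fintype.card β) {k : ℕ} (a : Fin k → α)
    (ha : Function.Injective a) (T : Finset β) :
    ((∑ f : α ↪ β, ∏ i : Fin k, (if f (a i) ∈ T then (1 : ℝ) else 0)) /
        (Fintype.card (α ↪ β) : ℝ)
      ≤ ∏ i : Fin k,
          ((∑ f : α ↪ β, (if f (a i) ∈ T then (1 : ℝ) else 0)) /
            (Fintype.card (α ↪ β) : ℝ))) := by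
  have hk : k ≤ Fintype.card α := by
    simpa using Fintype.card_le_of_injective a ha
  have hkn : k ≤ Fintype.card β := le_trans hk hcard
  have hNpos : 0 < Fintype.card (α ↪ β) :=
    Fintype.card_pos_iff.mpr (Function.Embedding.nonempty_iff_card_le.mpr hcard)
  have hsn : T.card ≤ Fintype.card β := Finset.card_le_univ T
  set N : ℝ := (Fintype.card (α ↪ β) : ℝ) with hNdef
  have hN0 : (0 : ℝ) < N := by rw [hNdef]; exact_mod_cast hNpos
  set n : ℕ := Fintype.card β
  set s : ℕ := T.card
  -- LHS equals (s)_k / (n)_k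
  have hdnk : (0 : ℝ) < (n.descFactorial k : ℝ) := by
    have : n.descFactorial k ≠ 0 := by
      rw [Ne, Nat.descFactorial_eq_zero_iff_lt]; omega
    positivity
  have hLHS : (∑ f : α ↪ β, ∏ i : Fin k, (if f (a i) ∈ T then (1 : ℝ) else 0)) / N
      = (s.descFactorial k : ℝ) / (n.descFactorial k : ℝ) := by
    have h1 : (∑ f : α ↪ β, ∏ i : Fin k, (if f (a i) ∈ T then (1 : ℝ) else 0))
        = ((Finset.univ.filter fun f : α ↪ β => ∀ i, f (a i) ∈ T).card : ℝ) := by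
      simp only [Fintype.prod_boole]
      rw [Finset.card_filter]
      push_cast
      exact Finset.sum_congr rfl fun x _ => by congr
    rw [h1]
    rw [div_eq_div_iff hN0.ne' hdnk.ne']
    have h2 := main_count (α := α) (β := β) ha T
    rw [hNdef]
    exact_mod_cast (Nat.mul_comm _ _).trans h2
  rw [hLHS]
  -- Each RHS factor equals s / n
  have hfac : ∀ i : Fin k,
      (∑ f : α ↪ β, (if f (a i) ∈ T then (1 : ℝ) else 0)) / N = (s : ℝ) / (n : ℝ) := by
    intro i
    have hn0 : (0 : ℝ) < (n : ℝ) := by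
      have : 0 < n := lt_of_lt_of_le i.pos hkn
      exact_mod_cast this
    have h1 : (∑ f : α ↪ β, (if f (a i) ∈ T then (1 : ℝ) else 0))
        = ((Finset.univ.filter fun f : α ↪ β => f (a i) ∈ T).card : ℝ) := by
      rw [Finset.card_filter]
      push_cast
      rfl
    have h2 := main_count (α := α) (β := β)
      (a := fun _ : Fin 1 => a i) (fun x y _ => Subsingleton.elim x y) T
    simp only [Nat.descFactorial_one] at h2
    have h3 : (Finset.univ.filter fun f : α ↪ β => ∀ j : Fin 1, f (a i) ∈ T)
        = Finset.univ.filter fun f : α ↪ β => f (a i) ∈ T := by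
      apply Finset.filter_congr; intro f _; simp
    rw [h3] at h2
    rw [h1, div_eq_div_iff hN0.ne' hn0.ne', hNdef]
    exact_mod_cast (Nat.mul_comm _ _).trans h2
  calc (s.descFactorial k : ℝ) / (n.descFactorial k : ℝ)
      ≤ ((s : ℝ) / (n : ℝ)) ^ k := by
        rw [Nat.descFactorial_eq_prod_range s k, Nat.descFactorial_eq_prod_range n k]
        push_cast
        rw [← Finset.prod_div_distrib,
          show ((s : ℝ) / (n : ℝ)) ^ k = ∏ _j ∈ Finset.range k, ((s : ℝ) / (n : ℝ)) by
            rw [Finset.prod_const, Finset.card_range]]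
        apply Finset.prod_le_prod
        · intro j hj; positivity
        · intro j hj
          rw [Finset.mem_range] at hj
          have hjn : j < n := lt_of_lt_of_le hj hkn
          have hn0 : (0 : ℝ) < (n : ℝ) := by
            have : 0 < n := by omega
            exact_mod_cast this
          have hnj0 : (0 : ℝ) < ((n - j : ℕ) : ℝ) := by
            have : 0 < n - j := by omega
            exact_mod_cast this
          by_cases hjs : j < s
          · rw [div_le_div_iff₀ hnj0 hn0]
            push_cast [Nat.cast_sub (le_of_lt hjs), Nat.cast_sub (le_of_lt hjn)]
            have hs_le : (s : ℝ) ≤ (n : ℝ) := by exact_mod_cast hsn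
            have hj0 : (0 : ℝ) ≤ (j : ℝ) := by positivity
            nlinarith
          · have : s - j = 0 := by omega
            rw [this]
            simp only [Nat.cast_zero, zero_div]
            positivity
    _ = ∏ i : Fin k, ((s : ℝ) / (n : ℝ)) := by
        rw [Finset.prod_const, Finset.card_univ, Fintype.card_fin]
    _ = ∏ i : Fin k,
          ((∑ f : α ↪ β, (if f (a i) ∈ T then (1 : ℝ) else 0)) / N) := by
        exact Finset.prod_congr rfl fun i _ => (hfac i).symm

theorem stmt2 {α β : Type*} [Fintype α] [Fintype β]
    (hcard : Fintype.card α ≤ Fintype.card β) {k : ℕ} (a : Fin k → α)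
    (ha : Function.Injective a) (Sb : Finset β) :
    ((∑ f : α ↪ β, ∏ i : Fin k, (if f (a i) ∈ Sb then (1 : ℝ) else 0)) /
        (Fintype.card (α ↪ β) : ℝ)
      ≤ ∏ i : Fin k,
          ((∑ f : α ↪ β, (if f (a i) ∈ Sb then (1 : ℝ) else 0)) /
            (Fintype.card (α ↪ β) : ℝ)))
    ∧
    ((∑ f : α ↪ β, ∏ i : Fin k, (1 - if f (a i) ∈ Sb then (1 : ℝ) else 0)) /
        (Fintype.card (α ↪ β) : ℝ)
      ≤ ∏ i : Fin k,
          ((∑ f : α ↪ β, (1 - if f (a i) ∈ Sb then (1 : ℝ) else 0)) /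
            (Fintype.card (α ↪ β) : ℝ))) := by
  constructor
  · exact key hcard a ha Sb
  · have htr : ∀ (f : α ↪ β) (i : Fin k),
        (1 - if f (a i) ∈ Sb then (1 : ℝ) else 0) = if f (a i) ∈ Sbᶜ then (1 : ℝ) else 0 := by
      intro f i
      by_cases h : f (a i) ∈ Sb <;> simp [h, Finset.mem_compl]
    simp only [htr]
    exact key hcard a ha Sbᶜ
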